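/- Let t ∈ ℂ, 0 < s < 1/2, d ≥ 1 and c : ℕ^d × ℕ^d → ℂ. Assume that for every r > 0 there exist ρ > 0 and C > 0 such that |c(α,β)| ≤ C · exp(−ρ |α|^{1/(2s)} + r |β|^{1/(2s)}) for all α, β ∈ ℕ^d. Then T_{0,t} c satisfies the same property: for every r > 0 there exist ρ > 0 and C > 0 such that |(T_{0,t} c)(α,β)| ≤ C · exp(−ρ |α|^{1/(2s)} + r |β|^{1/(2s)}) for all α, β. (This expresses that T_{0,t} maps the space ℓ_{𝓑,s}(ℕ^{2d}) into itself.) -/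

import Mathlib

open Finset

set_option maxHeartbeats 1000000

noncomputable section

/-- Size of a multi-index: `|α| = α₁ + ⋯ + α_d`. -/
def msize {d : ℕ} (α : Fin d → ℕ) : ℕ := ∑ i, α i

/-- Factorial of a multi-index: `α! = ∏ᵢ αᵢ!`. -/
def mfact {d : ℕ} (α : Fin d → ℕ) : ℕ := ∏ i, Nat.factorial (α i)

/-- Binomial coefficient of multi-indices: `C(α,γ) = ∏ᵢ choose(αᵢ,γᵢ)`. -/
def mchoose {d : ℕ} (α γ : Fin d → ℕ) : ℕ := ∏ i, Nat.choose (α i) (γ i)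

/-- The binomial operator
`(T_{0,t} c)(α,β) = Σ_{γ ≤ α, γ ≤ β} (C(α,γ) C(β,γ))^{1/2} t^{|γ|} c(α−γ, β−γ)`. -/
def T0 {d : ℕ} (t : ℂ) (c : ((Fin d → ℕ) × (Fin d → ℕ)) → ℂ) :
    ((Fin d → ℕ) × (Fin d → ℕ)) → ℂ := fun p =>
  ∑ γ ∈ Finset.Iic p.1 ∩ Finset.Iic p.2,
    ((Real.sqrt ((mchoose p.1 γ * mchoose p.2 γ : ℕ)) : ℝ) : ℂ) * t ^ (msize γ) *
      c (p.1 - γ, p.2 - γ)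

/- ### Auxiliary lemmas -/

lemma msize_mono {d : ℕ} {γ α : Fin d → ℕ} (h : γ ≤ α) : msize γ ≤ msize α :=
  Finset.sum_le_sum fun i _ => h i

lemma msize_sub_add {d : ℕ} {γ α : Fin d → ℕ} (h : γ ≤ α) :
    msize (α - γ) + msize γ = msize α := by
  unfold msize
  rw [← Finset.sum_add_distrib]
  exact Finset.sum_congr rfl fun i _ => Nat.sub_add_cancel (h i)

lemma nat_choose_le_two_pow (n k : ℕ) : n.choose k ≤ 2 ^ n := by
  rcases le_or_gt k n with h | h
  · calc n.choose k ≤ ∑ m ∈ Finset.range (n + 1), n.choose m :=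
        Finset.single_le_sum (fun i _ => Nat.zero_le _)
          (Finset.mem_range.2 (Nat.lt_succ_of_le h))
      _ = 2 ^ n := Nat.sum_range_choose n
  · simp [Nat.choose_eq_zero_of_lt h]

lemma mchoose_le_two_pow {d : ℕ} (α γ : Fin d → ℕ) : mchoose α γ ≤ 2 ^ msize α := by
  unfold mchoose msize
  calc (∏ i, Nat.choose (α i) (γ i)) ≤ ∏ i, 2 ^ (α i) :=
        Finset.prod_le_prod' fun i _ => nat_choose_le_two_pow (α i) (γ i)
    _ = 2 ^ ∑ i, α i := Finset.prod_pow_eq_pow_sum _ _ _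

lemma mchoose_pos {d : ℕ} {α γ : Fin d → ℕ} (h : γ ≤ α) : 0 < mchoose α γ :=
  Finset.prod_pos fun i _ => Nat.choose_pos (h i)

/-- Linear functions are eventually dominated by superlinear powers. -/
lemma linear_le_rpow (κ : ℝ) (hκ : 1 < κ) (A ε : ℝ) (hε : 0 < ε) :
    ∃ M > 0, ∀ x : ℝ, 0 ≤ x → A * x ≤ ε * x ^ κ + M := by
  rcases le_or_gt A 0 with hA | hA
  · exact ⟨1, one_pos, fun x hx => by
      have h1 : A * x ≤ 0 := mul_nonpos_of_nonpos_of_nonneg hA hx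
      have h2 : 0 ≤ ε * x ^ κ := by positivity
      linarith⟩
  · set X := (A / ε) ^ (1 / (κ - 1)) with hX
    have hX0 : 0 ≤ X := Real.rpow_nonneg (by positivity) _
    refine ⟨A * X + 1, by positivity, fun x hx => ?_⟩
    rcases le_or_gt x X with h | h
    · have h1 : A * x ≤ A * X := by nlinarith
      have h2 : 0 ≤ ε * x ^ κ := by positivity
      linarith
    · have hx0 : 0 < x := lt_of_le_of_lt hX0 h
      have h1 : X ^ (κ - 1) ≤ x ^ (κ - 1) :=
        Real.rpow_le_rpow hX0 h.le (by linarith)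
      have h2 : X ^ (κ - 1) = A / ε := by
        rw [hX, ← Real.rpow_mul (by positivity), one_div,
          inv_mul_cancel₀ (by linarith : κ - 1 ≠ 0), Real.rpow_one]
      have h3 : A / ε ≤ x ^ (κ - 1) := h2 ▸ h1
      have h4 : A ≤ ε * x ^ (κ - 1) := by
        rw [div_le_iff₀ hε] at h3; linarith [h3]
      have h5 : x ^ (κ - 1) * x = x ^ κ := by
        rw [← Real.rpow_add_one (ne_of_gt hx0) (κ - 1)]
        ring_nf
      have h6 : A * x ≤ ε * x ^ κ := by
        calc A * x ≤ (ε * x ^ (κ - 1)) * x := by nlinarith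
          _ = ε * x ^ κ := by rw [mul_assoc, h5]
      nlinarith

/-- A reverse triangle-type inequality for `rpow`, `κ > 1`:
for all `ε > 0` there is `ρ' > 0` with `-ρ (a-b)^κ ≤ -ρ' a^κ + ε b^κ`. -/
lemma rpow_sub_lower (κ : ℝ) (hκ : 1 < κ) (ρ ε : ℝ) (hρ : 0 < ρ) (hε : 0 < ε) :
    ∃ ρ' > 0, ∀ a b : ℝ, 0 ≤ b → b ≤ a →
      -ρ * (a - b) ^ κ ≤ -ρ' * a ^ κ + ε * b ^ κ := by
  set q := κ - 1 with hq
  have hq0 : 0 < q := by simp [hq]; linarith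
  set x := (ε / ρ) ^ (1 / q) with hx
  have hx0 : 0 < x := Real.rpow_pos_of_pos (by positivity) _
  set l := min (1/2) (x/2) with hl
  have hl0 : 0 < l := lt_min (by norm_num) (by positivity)
  have hl2 : l ≤ 1/2 := min_le_left _ _
  have hlx : 2 * l ≤ x := by
    have := min_le_right (1/2 : ℝ) (x/2); linarith [hl ▸ this]
  have h1l : (0:ℝ) < 1 - l := by linarith
  refine ⟨ρ * l ^ q, by positivity, fun a b hb hba => ?_⟩
  have ha : 0 ≤ a := le_trans hb hba
  have hab : 0 ≤ a - b := by linarith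
  have hcoef : ρ * l ^ q * ((1 - l) ^ q)⁻¹ ≤ ε := by
    have h2l : (2*l) ^ q ≤ x ^ q := Real.rpow_le_rpow (by positivity) hlx hq0.le
    have hxq : x ^ q = ε / ρ := by
      rw [hx, ← Real.rpow_mul (by positivity), one_div,
        inv_mul_cancel₀ (ne_of_gt hq0), Real.rpow_one]
    have hhalf : (1/2 : ℝ) ≤ 1 - l := by linarith
    have h12 : (1/2 : ℝ) ^ q ≤ (1 - l) ^ q := Real.rpow_le_rpow (by norm_num) hhalf hq0.le
    have hinv : ((1 - l) ^ q)⁻¹ ≤ ((1/2 : ℝ) ^ q)⁻¹ :=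
      inv_anti₀ (Real.rpow_pos_of_pos (by norm_num) _) h12
    have hmul : l ^ q * ((1/2 : ℝ) ^ q)⁻¹ = (2*l) ^ q := by
      rw [Real.mul_rpow (by norm_num) hl0.le, ← Real.inv_rpow (by norm_num)]
      norm_num
      ring
    have hlq : 0 ≤ l ^ q := Real.rpow_nonneg hl0.le _
    calc ρ * l ^ q * ((1 - l) ^ q)⁻¹ ≤ ρ * l ^ q * ((1/2 : ℝ) ^ q)⁻¹ := by
          apply mul_le_mul_of_nonneg_left hinv (by positivity)
      _ = ρ * (2*l) ^ q := by rw [mul_assoc, hmul]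
      _ ≤ ρ * (ε / ρ) := by
          apply mul_le_mul_of_nonneg_left _ hρ.le
          rw [← hxq]; exact h2l
      _ = ε := by field_simp
  have hconv := (convexOn_rpow hκ.le).2 (Set.mem_Ici.2 (by positivity : (0:ℝ) ≤ (a-b)/l))
    (Set.mem_Ici.2 (by positivity : (0:ℝ) ≤ b/(1-l))) hl0.le (by linarith : (0:ℝ) ≤ 1 - l)
    (by ring)
  have hpt : l • ((a-b)/l) + (1-l) • (b/(1-l)) = a := by
    simp only [smul_eq_mul]
    field_simp
    ring
  rw [hpt] at hconv
  simp only [smul_eq_mul] at hconv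
  have hdiv1 : ((a-b)/l) ^ κ = (a-b) ^ κ / l ^ κ := Real.div_rpow hab hl0.le κ
  have hdiv2 : (b/(1-l)) ^ κ = b ^ κ / (1-l) ^ κ := Real.div_rpow hb h1l.le κ
  rw [hdiv1, hdiv2] at hconv
  have hlq : 0 < l ^ q := Real.rpow_pos_of_pos hl0 _
  have key : ρ * l ^ q * a ^ κ ≤ ρ * (a-b) ^ κ + (ρ * l ^ q * ((1 - l) ^ q)⁻¹) * b ^ κ := by
    have e1 : l ^ q * (l * ((a-b) ^ κ / l ^ κ)) = (a-b) ^ κ := by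
      rw [div_eq_mul_inv]
      have : l ^ q * l = l ^ κ := by
        rw [← Real.rpow_add_one (ne_of_gt hl0) q]; simp [hq]
      have hlκ : (0:ℝ) < l ^ κ := Real.rpow_pos_of_pos hl0 _
      calc l ^ q * (l * ((a-b) ^ κ * (l ^ κ)⁻¹)) = (l ^ q * l) * ((a-b) ^ κ * (l ^ κ)⁻¹) := by ring
        _ = l ^ κ * ((a-b) ^ κ * (l ^ κ)⁻¹) := by rw [this]
        _ = (a-b) ^ κ := by field_simp
    have e2 : l ^ q * ((1-l) * (b ^ κ / (1-l) ^ κ)) = (l ^ q * ((1 - l) ^ q)⁻¹) * b ^ κ := by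
      have h1lκ : (0:ℝ) < (1-l) ^ κ := Real.rpow_pos_of_pos h1l _
      have h1lq : (0:ℝ) < (1-l) ^ q := Real.rpow_pos_of_pos h1l _
      have hthis : (1-l) ^ q * (1-l) = (1-l) ^ κ := by
        rw [← Real.rpow_add_one (ne_of_gt h1l) q]; simp [hq]
      have h' : (1-l)/(1-l) ^ κ = ((1-l) ^ q)⁻¹ := by
        rw [← hthis]; field_simp
      calc l ^ q * ((1-l) * (b ^ κ / (1-l) ^ κ)) = l ^ q * (b ^ κ * ((1-l)/(1-l) ^ κ)) := by ring
        _ = l ^ q * (b ^ κ * ((1-l) ^ q)⁻¹) := by rw [h']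
        _ = (l ^ q * ((1 - l) ^ q)⁻¹) * b ^ κ := by ring
    have := mul_le_mul_of_nonneg_left hconv (by positivity : (0:ℝ) ≤ ρ * l ^ q)
    calc ρ * l ^ q * a ^ κ ≤ ρ * l ^ q * (l * ((a-b)^κ / l^κ) + (1-l) * (b^κ/(1-l)^κ)) := this
      _ = ρ * (l ^ q * (l * ((a-b) ^ κ / l ^ κ))) + ρ * (l ^ q * ((1-l) * (b ^ κ / (1-l) ^ κ))) := by
          ring
      _ = ρ * (a-b) ^ κ + (ρ * l ^ q * ((1 - l) ^ q)⁻¹) * b ^ κ := by rw [e1, e2]; ring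
  have hbκ : 0 ≤ b ^ κ := Real.rpow_nonneg hb _
  nlinarith [mul_le_mul_of_nonneg_right hcoef hbκ]

/-- `T_{0,t}` maps `ℓ_{𝓑,s}(ℕ^{2d})` into itself, `0 < s < 1/2`. -/
theorem stmt_4 (t : ℂ) (s : ℝ) (hs : 0 < s) (hs' : s < 1/2) (d : ℕ) (hd : 1 ≤ d)
    (c : ((Fin d → ℕ) × (Fin d → ℕ)) → ℂ)
    (hc : ∀ r > (0:ℝ), ∃ ρ > (0:ℝ), ∃ C > (0:ℝ), ∀ α β : Fin d → ℕ,
      ‖c (α, β)‖ ≤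
        C * Real.exp (-ρ * ((msize α : ℝ) ^ ((1:ℝ)/(2*s))) +
          r * ((msize β : ℝ) ^ ((1:ℝ)/(2*s))))) :
    ∀ r > (0:ℝ), ∃ ρ > (0:ℝ), ∃ C > (0:ℝ), ∀ α β : Fin d → ℕ,
      ‖T0 t c (α, β)‖ ≤
        C * Real.exp (-ρ * ((msize α : ℝ) ^ ((1:ℝ)/(2*s))) +
          r * ((msize β : ℝ) ^ ((1:ℝ)/(2*s)))) := by
  intro r hr
  have h2s : 0 < 2 * s := by linarith
  set κ := (1:ℝ)/(2*s) with hκdef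
  have hκ : 1 < κ := by rw [hκdef, lt_div_iff₀ h2s]; linarith
  have hκ0 : 0 ≤ κ := by linarith
  obtain ⟨ρ, hρ, C, hC, hbd⟩ := hc (r/4) (by linarith)
  obtain ⟨ρ', hρ', hA⟩ := rpow_sub_lower κ hκ ρ (r/4) hρ (by linarith)
  obtain ⟨M₁, hM₁, hB₁⟩ := linear_le_rpow κ hκ (Real.log 2) (ρ'/2) (by linarith)
  obtain ⟨M₂, hM₂, hB₂⟩ :=
    linear_le_rpow κ hκ (2*Real.log 2 + Real.log (1 + ‖t‖)) (r/4) (by linarith)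
  refine ⟨ρ'/2, by linarith, C * Real.exp (M₁ + M₂), by positivity, ?_⟩
  intro α β
  have ha0 : (0:ℝ) ≤ (msize α : ℝ) := Nat.cast_nonneg _
  have hb0 : (0:ℝ) ≤ (msize β : ℝ) := Nat.cast_nonneg _
  have ht1 : (1:ℝ) ≤ 1 + ‖t‖ := by
    have := norm_nonneg t; linarith
  set E : ℝ := -ρ' * (msize α : ℝ) ^ κ + (r/2) * (msize β : ℝ) ^ κ with hE
  set B : ℝ := (2:ℝ) ^ (msize α) * (2:ℝ) ^ (msize β) *
      ((1 + ‖t‖) ^ (msize β) * (C * Real.exp E)) with hBdef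
  -- per-term bound
  have hterm : ∀ γ ∈ Finset.Iic α ∩ Finset.Iic β,
      ‖((Real.sqrt ((mchoose α γ * mchoose β γ : ℕ)) : ℝ) : ℂ) * t ^ (msize γ) *
        c (α - γ, β - γ)‖ ≤ B := by
    intro γ hγ
    have hγα : γ ≤ α := Finset.mem_Iic.1 (Finset.mem_inter.1 hγ).1
    have hγβ : γ ≤ β := Finset.mem_Iic.1 (Finset.mem_inter.1 hγ).2
    have hg0 : (0:ℝ) ≤ (msize γ : ℝ) := Nat.cast_nonneg _
    have hga : (msize γ : ℝ) ≤ (msize α : ℝ) := Nat.cast_le.2 (msize_mono hγα)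
    have hgb : (msize γ : ℝ) ≤ (msize β : ℝ) := Nat.cast_le.2 (msize_mono hγβ)
    have hsubα : ((msize (α - γ) : ℕ) : ℝ) = (msize α : ℝ) - (msize γ : ℝ) := by
      have := msize_sub_add hγα
      have : ((msize (α - γ) : ℕ) : ℝ) + (msize γ : ℝ) = (msize α : ℝ) := by
        exact_mod_cast congrArg (Nat.cast : ℕ → ℝ) this
      linarith
    have hsubβ : ((msize (β - γ) : ℕ) : ℝ) = (msize β : ℝ) - (msize γ : ℝ) := by
      have := msize_sub_add hγβ
      have : ((msize (β - γ) : ℕ) : ℝ) + (msize γ : ℝ) = (msize β : ℝ) := by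
        exact_mod_cast congrArg (Nat.cast : ℕ → ℝ) this
      linarith
    -- bound on the sqrt factor
    have hN1 : (1:ℝ) ≤ ((mchoose α γ * mchoose β γ : ℕ) : ℝ) := by
      have : 1 ≤ mchoose α γ * mchoose β γ :=
        Nat.one_le_iff_ne_zero.2 (Nat.mul_ne_zero (mchoose_pos hγα).ne' (mchoose_pos hγβ).ne')
      exact_mod_cast this
    have h1 : Real.sqrt ((mchoose α γ * mchoose β γ : ℕ)) ≤
        (2:ℝ) ^ (msize α) * (2:ℝ) ^ (msize β) := by
      have hs1 : Real.sqrt ((mchoose α γ * mchoose β γ : ℕ)) ≤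
          ((mchoose α γ * mchoose β γ : ℕ) : ℝ) := by
        nlinarith [Real.sq_sqrt (le_trans zero_le_one hN1),
          Real.sqrt_nonneg (((mchoose α γ * mchoose β γ : ℕ) : ℝ)), hN1]
      have hs2 : (mchoose α γ * mchoose β γ : ℕ) ≤ 2 ^ (msize α) * 2 ^ (msize β) :=
        Nat.mul_le_mul (mchoose_le_two_pow α γ) (mchoose_le_two_pow β γ)
      have hs2' : ((mchoose α γ * mchoose β γ : ℕ) : ℝ) ≤
          (2:ℝ) ^ (msize α) * (2:ℝ) ^ (msize β) := by exact_mod_cast hs2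
      linarith
    -- bound on the t-power factor
    have h2 : ‖t‖ ^ (msize γ) ≤ (1 + ‖t‖) ^ (msize β) := by
      calc ‖t‖ ^ (msize γ) ≤ (1 + ‖t‖) ^ (msize γ) :=
            pow_le_pow_left₀ (norm_nonneg _) (by linarith) _
        _ ≤ (1 + ‖t‖) ^ (msize β) :=
            pow_le_pow_right₀ ht1 (msize_mono hγβ)
    -- bound on the c factor
    have h3 : ‖c (α - γ, β - γ)‖ ≤ C * Real.exp E := by
      have hb1 := hbd (α - γ) (β - γ)
      rw [hsubα, hsubβ] at hb1
      refine hb1.trans ?_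
      apply mul_le_mul_of_nonneg_left _ hC.le
      apply Real.exp_le_exp.2
      have e1 : -ρ * ((msize α : ℝ) - (msize γ : ℝ)) ^ κ ≤
          -ρ' * (msize α : ℝ) ^ κ + (r/4) * (msize γ : ℝ) ^ κ := hA _ _ hg0 hga
      have e2 : ((msize γ : ℝ)) ^ κ ≤ ((msize β : ℝ)) ^ κ := Real.rpow_le_rpow hg0 hgb hκ0
      have e3 : ((msize β : ℝ) - (msize γ : ℝ)) ^ κ ≤ ((msize β : ℝ)) ^ κ :=
        Real.rpow_le_rpow (by linarith) (by linarith) hκ0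
      have e2' := mul_le_mul_of_nonneg_left e2 (by linarith : (0:ℝ) ≤ r/4)
      have e3' := mul_le_mul_of_nonneg_left e3 (by linarith : (0:ℝ) ≤ r/4)
      rw [hE]
      linarith
    rw [norm_mul, norm_mul, norm_pow, Complex.norm_real, Real.norm_eq_abs,
      abs_of_nonneg (Real.sqrt_nonneg _)]
    have hfin := mul_le_mul (mul_le_mul h1 h2 (pow_nonneg (norm_nonneg _) _)
        (by positivity)) h3 (norm_nonneg _) (by positivity)
    refine hfin.trans_eq ?_
    rw [hBdef]; ring
  -- sum the bounds
  have habs : ‖T0 t c (α, β)‖ ≤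
      ∑ γ ∈ Finset.Iic α ∩ Finset.Iic β,
        ‖((Real.sqrt ((mchoose α γ * mchoose β γ : ℕ)) : ℝ) : ℂ) * t ^ (msize γ) *
          c (α - γ, β - γ)‖ := by
    simp only [T0]
    exact norm_sum_le _ _
  have hsum : ∑ γ ∈ Finset.Iic α ∩ Finset.Iic β,
      ‖((Real.sqrt ((mchoose α γ * mchoose β γ : ℕ)) : ℝ) : ℂ) * t ^ (msize γ) *
        c (α - γ, β - γ)‖ ≤ ((Finset.Iic α ∩ Finset.Iic β).card : ℝ) * B := by
    have := Finset.sum_le_card_nsmul _ _ _ hterm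
    rwa [nsmul_eq_mul] at this
  have hcard : ((Finset.Iic α ∩ Finset.Iic β).card : ℝ) ≤ (2:ℝ) ^ (msize β) := by
    have hc1 : (Finset.Iic α ∩ Finset.Iic β).card ≤ (Finset.Iic β).card :=
      Finset.card_le_card Finset.inter_subset_right
    have hc2 : (Finset.Iic β).card ≤ 2 ^ (msize β) := by
      rw [Pi.card_Iic]
      calc (∏ i, (Finset.Iic (β i)).card) = ∏ i, (β i + 1) := by
            simp [Nat.card_Iic]
        _ ≤ ∏ i, 2 ^ (β i) := Finset.prod_le_prod' fun i _ => (by exact Nat.lt_two_pow_self)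
        _ = 2 ^ msize β := Finset.prod_pow_eq_pow_sum _ _ _
    exact_mod_cast le_trans hc1 hc2
  have hBnn : 0 ≤ B := by rw [hBdef]; positivity
  have hmain : ‖T0 t c (α, β)‖ ≤ (2:ℝ) ^ (msize β) * B := by
    calc ‖T0 t c (α, β)‖ ≤ _ := habs
      _ ≤ ((Finset.Iic α ∩ Finset.Iic β).card : ℝ) * B := hsum
      _ ≤ (2:ℝ) ^ (msize β) * B := mul_le_mul_of_nonneg_right hcard hBnn
  refine hmain.trans ?_
  -- convert powers to exponentials
  have e2a : (2:ℝ) ^ (msize α) = Real.exp ((msize α : ℝ) * Real.log 2) := by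
    rw [Real.exp_nat_mul, Real.exp_log two_pos]
  have e2b : (2:ℝ) ^ (msize β) = Real.exp ((msize β : ℝ) * Real.log 2) := by
    rw [Real.exp_nat_mul, Real.exp_log two_pos]
  have e2t : (1 + ‖t‖) ^ (msize β) =
      Real.exp ((msize β : ℝ) * Real.log (1 + ‖t‖)) := by
    rw [Real.exp_nat_mul, Real.exp_log (by linarith)]
  have expineq : (msize α : ℝ) * Real.log 2 + (msize β : ℝ) * Real.log 2 +
      (msize β : ℝ) * Real.log 2 + (msize β : ℝ) * Real.log (1 + ‖t‖) +
      (-ρ' * (msize α : ℝ) ^ κ + r/2 * (msize β : ℝ) ^ κ) ≤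
      (M₁ + M₂) + (-(ρ'/2) * (msize α : ℝ) ^ κ + r * (msize β : ℝ) ^ κ) := by
    have hb1 := hB₁ _ ha0
    have hb2 := hB₂ _ hb0
    have hbκ : 0 ≤ ((msize β : ℝ)) ^ κ := Real.rpow_nonneg hb0 _
    have hq : r/2 * (msize β : ℝ) ^ κ + r/4 * (msize β : ℝ) ^ κ ≤
        r * (msize β : ℝ) ^ κ := by nlinarith [hbκ, hr]
    nlinarith [hb1, hb2, hq]
  have key : Real.exp ((msize α : ℝ) * Real.log 2) * Real.exp ((msize β : ℝ) * Real.log 2) *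
      Real.exp ((msize β : ℝ) * Real.log 2) *
      Real.exp ((msize β : ℝ) * Real.log (1 + ‖t‖)) * Real.exp E ≤
      Real.exp (M₁ + M₂) *
        Real.exp (-(ρ'/2) * (msize α : ℝ) ^ κ + r * (msize β : ℝ) ^ κ) := by
    rw [hE, ← Real.exp_add, ← Real.exp_add, ← Real.exp_add, ← Real.exp_add, ← Real.exp_add]
    exact Real.exp_le_exp.2 expineq
  calc (2:ℝ) ^ (msize β) * B =
      C * (Real.exp ((msize α : ℝ) * Real.log 2) * Real.exp ((msize β : ℝ) * Real.log 2) *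
        Real.exp ((msize β : ℝ) * Real.log 2) *
        Real.exp ((msize β : ℝ) * Real.log (1 + ‖t‖)) * Real.exp E) := by
        rw [hBdef, e2a, e2b, e2t]; ring
    _ ≤ C * (Real.exp (M₁ + M₂) *
        Real.exp (-(ρ'/2) * (msize α : ℝ) ^ κ + r * (msize β : ℝ) ^ κ)) :=
        mul_le_mul_of_nonneg_left key hC.le
    _ = C * Real.exp (M₁ + M₂) *
        Real.exp (-(ρ'/2) * (msize α : ℝ) ^ κ + r * (msize β : ℝ) ^ κ) := by ring

end
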